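/- Let M be a graded comultiplication R-module and N a graded 2-absorbing coprimary R-submodule of M such that Grad(Ann_R(N)) = Ann_R(N). Then N is a graded strongly 2-absorbing second R-submodule of M. -/

import Mathlib

open DirectSum Pointwise

variable {G : Type} [AddGroup G] [DecidableEq G]
variable {R : Type} [CommRing R] (𝒜 : G → AddSubgroup R) [GradedRing 𝒜]
variable {M : Type} [AddCommGroup M] [Module R M] (ℳ : G → AddSubgroup M)
  [SetLike.GradedSMul 𝒜 ℳ] [DirectSum.Decomposition ℳ]

/-- A submodule is graded if it contains every homogeneous component of each of
its elements. -/
def IsGradedSubmodule (N : Submodule R M) : Prop :=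
  ∀ (g : G) (m : M), m ∈ N → (DirectSum.decompose ℳ m g : M) ∈ N

/-- The graded radical of an ideal: all `r` such that for each `g` some positive
power of the degree-`g` component of `r` lies in `P`. -/
def gradRad (P : Ideal R) : Set R :=
  {r : R | ∀ g : G, ∃ n : ℕ, 0 < n ∧ ((DirectSum.decompose 𝒜 r g : R)) ^ n ∈ P}

/-- Graded 2-absorbing coprimary submodule. -/
def IsGr2AbsCoprimary (N : Submodule R M) : Prop :=
  N ≠ ⊥ ∧ IsGradedSubmodule ℳ N ∧
  ∀ x y : R, (∃ g, x ∈ 𝒜 g) → (∃ g, y ∈ 𝒜 g) →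
    ∀ K : Submodule R M, IsGradedSubmodule ℳ K →
      (∀ m ∈ N, (x * y) • m ∈ K) →
      x ∈ gradRad 𝒜 (K.colon N) ∨ y ∈ gradRad 𝒜 (K.colon N) ∨ x * y ∈ N.annihilator

/-- Graded 2-absorbing primary ideal. -/
def IsGr2AbsPrimaryIdeal (P : Ideal R) : Prop :=
  P ≠ ⊤ ∧ (∀ (g : G) (r : R), r ∈ P → (DirectSum.decompose 𝒜 r g : R) ∈ P) ∧
  ∀ a b c : R, (∃ g, a ∈ 𝒜 g) → (∃ g, b ∈ 𝒜 g) → (∃ g, c ∈ 𝒜 g) →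
    a * b * c ∈ P → a * b ∈ P ∨ a * c ∈ gradRad 𝒜 P ∨ b * c ∈ gradRad 𝒜 P

/-- Graded strongly 2-absorbing second submodule. -/
def IsGrStrongly2AbsSecond (N : Submodule R M) : Prop :=
  N ≠ ⊥ ∧ IsGradedSubmodule ℳ N ∧
  ∀ x y : R, (∃ g, x ∈ 𝒜 g) → (∃ g, y ∈ 𝒜 g) →
    ∀ K : Submodule R M, IsGradedSubmodule ℳ K →
      (∀ m ∈ N, (x * y) • m ∈ K) →
      (∀ m ∈ N, x • m ∈ K) ∨ (∀ m ∈ N, y • m ∈ K) ∨ x * y ∈ N.annihilator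


lemma decompose_smul_of_mem (r : R) {m : M} {h : G} (hm : m ∈ ℳ h) (g : G) :
    (DirectSum.decompose ℳ (r • m) (g + h) : M) = (DirectSum.decompose 𝒜 r g : R) • m := by
  classical
  have hrw : r • m = ∑ g' ∈ (DirectSum.decompose 𝒜 r).support,
      ((DirectSum.decompose 𝒜 r g' : R) • m) := by
    rw [← Finset.sum_smul]
    conv_lhs => rw [← DirectSum.sum_support_decompose 𝒜 r]
  rw [hrw]
  have hdec : ∀ s : Finset G,
      (DirectSum.decompose ℳ (∑ g' ∈ s, ((DirectSum.decompose 𝒜 r g' : R) • m)) (g + h) : M)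
      = ∑ g' ∈ s, (DirectSum.decompose ℳ ((DirectSum.decompose 𝒜 r g' : R) • m) (g + h) : M) := by
    intro s
    induction s using Finset.induction with
    | empty => simp
    | insert _ _ hnot ih =>
      rw [Finset.sum_insert hnot, Finset.sum_insert hnot, DirectSum.decompose_add,
        DirectSum.add_apply, AddSubgroup.coe_add, ih]
  rw [hdec]
  have hmem2 : ∀ g' : G, (DirectSum.decompose 𝒜 r g' : R) • m ∈ ℳ (g' + h) := by
    intro g'
    have := SetLike.GradedSMul.smul_mem (SetLike.coe_mem (DirectSum.decompose 𝒜 r g')) hm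
    simpa [vadd_eq_add] using this
  rw [Finset.sum_eq_single g (fun b _ hbg => ?_) (fun hg => ?_)]
  · exact DirectSum.decompose_of_mem_same ℳ (hmem2 g)
  · exact DirectSum.decompose_of_mem_ne ℳ (hmem2 b)
      (fun hc => hbg (add_right_cancel hc))
  · have h0 : (DirectSum.decompose 𝒜 r g : R) = 0 := by
      have := DFinsupp.notMem_support_iff.mp hg
      simpa using congrArg (fun z : 𝒜 g => (z : R)) this
    rw [h0]
    simp

lemma ann_graded {K : Submodule R M} (hK : IsGradedSubmodule ℳ K) {r : R}
    (hr : r ∈ K.annihilator) (g : G) :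
    (DirectSum.decompose 𝒜 r g : R) ∈ K.annihilator := by
  classical
  rw [Submodule.mem_annihilator] at hr ⊢
  intro m hm
  have hmr : m = ∑ h ∈ (DirectSum.decompose ℳ m).support, (DirectSum.decompose ℳ m h : M) :=
    (DirectSum.sum_support_decompose ℳ m).symm
  rw [hmr, Finset.smul_sum]
  refine Finset.sum_eq_zero fun h _ => ?_
  have hmem : (DirectSum.decompose ℳ m h : M) ∈ ℳ h := SetLike.coe_mem _
  have h0 : r • (DirectSum.decompose ℳ m h : M) = 0 := hr _ (hK h m hm)
  rw [← decompose_smul_of_mem 𝒜 ℳ r hmem g, h0]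
  simp

lemma key_lemma
    (hcomul : ∀ N' : Submodule R M, IsGradedSubmodule ℳ N' →
      (N' : Set M) = {m : M | ∀ r ∈ N'.annihilator, r • m = (0 : M)})
    (N : Submodule R M)
    (hrad : gradRad 𝒜 N.annihilator = (N.annihilator : Set R))
    {K : Submodule R M} (hK : IsGradedSubmodule ℳ K)
    {x : R} {g0 : G} (hx : x ∈ 𝒜 g0) {n : ℕ} (hn : 0 < n)
    (hpow : ∀ m ∈ N, x ^ n • m ∈ K) : ∀ m ∈ N, x • m ∈ K := by
  classical
  obtain ⟨k, rfl⟩ : ∃ k, n = k + 1 := ⟨n - 1, (Nat.succ_pred_eq_of_pos hn).symm⟩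
  intro m hm
  have hset := hcomul K hK
  have hmemK : x • m ∈ (K : Set M) := by
    rw [hset]
    intro r hr
    have hterm : ∀ g : G, (DirectSum.decompose 𝒜 r g : R) * x ∈ N.annihilator := by
      intro g
      set a : R := (DirectSum.decompose 𝒜 r g : R) with ha
      have haK : a ∈ K.annihilator := ann_graded 𝒜 ℳ hK hr g
      have haxn : a * x ^ (k + 1) ∈ N.annihilator := by
        rw [Submodule.mem_annihilator]
        intro m' hm'
        rw [mul_smul]
        exact Submodule.mem_annihilator.mp haK _ (hpow m' hm')
      have hpw : (a * x) ^ (k + 1) ∈ N.annihilator := by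
        have heq : (a * x) ^ (k + 1) = a ^ k * (a * x ^ (k + 1)) := by ring
        rw [heq]
        exact Ideal.mul_mem_left _ _ haxn
      have hhom : a * x ∈ 𝒜 (g + g0) := SetLike.mul_mem_graded (SetLike.coe_mem _) hx
      have hgr : a * x ∈ gradRad 𝒜 N.annihilator := by
        intro g'
        by_cases hgg : g + g0 = g'
        · refine ⟨k + 1, Nat.succ_pos _, ?_⟩
          rw [← hgg, DirectSum.decompose_of_mem_same 𝒜 hhom]
          exact hpw
        · refine ⟨1, Nat.one_pos, ?_⟩
          rw [DirectSum.decompose_of_mem_ne 𝒜 hhom hgg]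
          simp
      rw [hrad] at hgr
      exact hgr
    have hrx : r * x ∈ N.annihilator := by
      have : r * x = ∑ g ∈ (DirectSum.decompose 𝒜 r).support,
          (DirectSum.decompose 𝒜 r g : R) * x := by
        rw [← Finset.sum_mul]
        conv_lhs => rw [← DirectSum.sum_support_decompose 𝒜 r]
      rw [this]
      exact Submodule.sum_mem _ fun g _ => hterm g
    rw [smul_smul]
    exact Submodule.mem_annihilator.mp hrx m hm
  exact hmemK

theorem stmt_10
    (hcomul : ∀ N' : Submodule R M, IsGradedSubmodule ℳ N' →
      (N' : Set M) = {m : M | ∀ r ∈ N'.annihilator, r • m = (0 : M)})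
    (N : Submodule R M) (hN : IsGr2AbsCoprimary 𝒜 ℳ N)
    (hrad : gradRad 𝒜 N.annihilator = (N.annihilator : Set R)) :
    IsGrStrongly2AbsSecond 𝒜 ℳ N := by
  obtain ⟨hne, hgr, habs⟩ := hN
  refine ⟨hne, hgr, ?_⟩
  intro x y hx hy K hK hxy
  rcases habs x y hx hy K hK hxy with hc | hc | hc
  · left
    obtain ⟨g0, hx0⟩ := hx
    obtain ⟨n, hn, hpow⟩ := hc g0
    rw [DirectSum.decompose_of_mem_same 𝒜 hx0, Submodule.mem_colon] at hpow
    exact key_lemma 𝒜 ℳ hcomul N hrad hK hx0 hn hpow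
  · right; left
    obtain ⟨g0, hy0⟩ := hy
    obtain ⟨n, hn, hpow⟩ := hc g0
    rw [DirectSum.decompose_of_mem_same 𝒜 hy0, Submodule.mem_colon] at hpow
    exact key_lemma 𝒜 ℳ hcomul N hrad hK hy0 hn hpow
  · right; right
    exact hc
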